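/- Let k ≥ 0 be an integer and let P and Q be Borel probability measures on ℝ with ∫|x|^k dP(x) < ∞ and ∫|x|^k dQ(x) < ∞. If ∫ (x−t)_+^k dP(x) = ∫ (x−t)_+^k dQ(x) for every t ≥ 0 and ∫ (t−x)_+^k dP(x) = ∫ (t−x)_+^k dQ(x) for every t ≤ 0, then P = Q. -/

import Mathlib

open MeasureTheory Filter Set
open Topology

/-- Truncated power function `(a)_+^k`, with the convention that `(a)_+^0` is the
indicator `1{a > 0}`. -/
noncomputable def truncPow (k : ℕ) (a : ℝ) : ℝ :=
  if k = 0 then (if 0 < a then 1 else 0) else (max a 0) ^ k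

lemma truncPow_nonneg (k : ℕ) (a : ℝ) : 0 ≤ truncPow k a := by
  unfold truncPow; split
  · split <;> norm_num
  · positivity
lemma truncPow_succ (j : ℕ) (a : ℝ) : truncPow (j+1) a = (max a 0) ^ (j+1) := by
  simp [truncPow]
lemma truncPow_zero' (a : ℝ) : truncPow 0 a = if 0 < a then 1 else 0 := by
  simp [truncPow]

lemma pow_sub_pow_bounds (j : ℕ) {A B : ℝ} (hB : 0 ≤ B) (hBA : B ≤ A) :
    (j+1 : ℝ) * (A - B) * B ^ j ≤ A ^ (j+1) - B ^ (j+1) ∧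
    A ^ (j+1) - B ^ (j+1) ≤ (j+1 : ℝ) * (A - B) * A ^ j := by
  have hA : 0 ≤ A := hB.trans hBA
  induction j with
  | zero => constructor <;> · push_cast; nlinarith
  | succ m ih =>
    obtain ⟨ih1, ih2⟩ := ih
    have hpow : B ^ (m+1) ≤ A ^ (m+1) := pow_le_pow_left₀ hB hBA _
    have hAB0 : (0:ℝ) ≤ A - B := by linarith
    have e2 : (A-B) * B^(m+1) ≤ (A-B) * A^(m+1) := mul_le_mul_of_nonneg_left hpow hAB0
    constructor
    · have key : A ^ (m+1+1) - B ^ (m+1+1)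
          = B * (A ^ (m+1) - B ^ (m+1)) + (A - B) * A ^ (m+1) := by ring
      have h1 : B * ((m+1 : ℝ) * (A - B) * B ^ m) ≤ B * (A ^ (m+1) - B ^ (m+1)) :=
        mul_le_mul_of_nonneg_left ih1 hB
      have e1 : ((m:ℝ)+1+1) * (A - B) * B ^ (m+1) =
          B * (((m:ℝ)+1) * (A - B) * B ^ m) + (A - B) * B ^ (m+1) := by ring
      push_cast
      linarith
    · have key : A ^ (m+1+1) - B ^ (m+1+1)
          = A * (A ^ (m+1) - B ^ (m+1)) + (A - B) * B ^ (m+1) := by ring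
      have h1 : A * (A ^ (m+1) - B ^ (m+1)) ≤ A * ((m+1 : ℝ) * (A - B) * A ^ m) :=
        mul_le_mul_of_nonneg_left ih2 hA
      have e1 : ((m:ℝ)+1+1) * (A - B) * A ^ (m+1) =
          A * (((m:ℝ)+1) * (A - B) * A ^ m) + (A - B) * A ^ (m+1) := by ring
      push_cast
      linarith

lemma truncPow_key (j : ℕ) {a b : ℝ} (h : b ≤ a) :
    (j+1 : ℝ) * (a - b) * truncPow j b ≤ truncPow (j+1) a - truncPow (j+1) b ∧
    truncPow (j+1) a - truncPow (j+1) b ≤ (j+1 : ℝ) * (a - b) * truncPow j a := by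
  have hB0 : (0:ℝ) ≤ max b 0 := le_max_right _ _
  have hA0 : (0:ℝ) ≤ max a 0 := le_max_right _ _
  have hBA : max b 0 ≤ max a 0 := max_le_max h le_rfl
  have hABab : max a 0 - max b 0 ≤ a - b := by
    rcases le_total b 0 with hb | hb
    · rcases le_total a 0 with ha | ha
      · rw [max_eq_right ha, max_eq_right hb]; linarith
      · rw [max_eq_left ha, max_eq_right hb]; linarith
    · rw [max_eq_left (hb.trans h), max_eq_left hb]
  obtain ⟨low, high⟩ := pow_sub_pow_bounds j hB0 hBA
  rw [truncPow_succ, truncPow_succ]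
  have hab0 : (0:ℝ) ≤ a - b := by linarith
  have hj1 : (0:ℝ) ≤ (j:ℝ) + 1 := by positivity
  rcases Nat.eq_zero_or_pos j with rfl | hj
  · simp only [truncPow_zero']
    constructor
    · split_ifs with hb
      · have hbb : max b 0 = b := max_eq_left hb.le
        have haa : max a 0 = a := max_eq_left (hb.le.trans h)
        rw [hbb, haa]
        push_cast
        norm_num
      · have hp : (max b 0)^(0+1) ≤ (max a 0)^(0+1) := pow_le_pow_left₀ hB0 hBA _
        simp only [mul_zero]
        linarith
    · split_ifs with ha
      · have haa : max a 0 = a := max_eq_left ha.le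
        have hbb : b ≤ max b 0 := le_max_left _ _
        rw [haa]
        push_cast
        norm_num
        linarith
      · push_neg at ha
        have haz : max a 0 = 0 := max_eq_right ha
        have hbz : max b 0 = 0 := le_antisymm (hBA.trans haz.le) hB0
        simp [haz, hbz]
  · obtain ⟨m, rfl⟩ : ∃ m, j = m + 1 := ⟨j - 1, (Nat.succ_pred_eq_of_pos hj).symm⟩
    simp only [truncPow_succ]
    constructor
    · refine le_trans ?_ low
      rcases le_total b 0 with hb | hb
      · have hbz : max b 0 = 0 := max_eq_right hb
        rw [hbz]
        simp [zero_pow]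
      · have heq : max a 0 - max b 0 = a - b := by
          rw [max_eq_left (hb.trans h), max_eq_left hb]
        rw [heq]
    · refine high.trans ?_
      exact mul_le_mul_of_nonneg_right (mul_le_mul_of_nonneg_left hABab hj1)
        (by positivity)

lemma measurable_truncPow (j : ℕ) : Measurable (truncPow j) := by
  rcases Nat.eq_zero_or_pos j with rfl | hj
  · have h0 : truncPow 0 = fun a : ℝ => if 0 < a then (1:ℝ) else 0 := funext truncPow_zero'
    rw [h0]
    exact Measurable.ite (measurableSet_lt measurable_const measurable_id) measurable_const
      measurable_const
  · obtain ⟨m, rfl⟩ : ∃ m, j = m + 1 := ⟨j - 1, (Nat.succ_pred_eq_of_pos hj).symm⟩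
    have : truncPow (m+1) = fun a => (max a 0) ^ (m+1) := funext (truncPow_succ m)
    rw [this]
    exact ((continuous_id.max continuous_const).pow _).measurable

lemma continuous_truncPow_succ (m : ℕ) : Continuous (truncPow (m+1)) := by
  have : truncPow (m+1) = fun a => (max a 0) ^ (m+1) := funext (truncPow_succ m)
  rw [this]
  exact (continuous_id.max continuous_const).pow _

lemma sum_pow_le (k : ℕ) {u v : ℝ} (hu : 0 ≤ u) (hv : 0 ≤ v) :
    (u + v) ^ k ≤ 2 ^ k * (u ^ k + v ^ k) := by
  rcases le_total u v with h | h
  · calc (u + v) ^ k ≤ (2 * v) ^ k := by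
          apply pow_le_pow_left₀ (by linarith) (by linarith)
      _ = 2 ^ k * v ^ k := by rw [mul_pow]
      _ ≤ 2 ^ k * (u ^ k + v ^ k) := by
          have : (0:ℝ) ≤ u ^ k := by positivity
          have h2 : (0:ℝ) ≤ (2:ℝ) ^ k := by positivity
          nlinarith
  · calc (u + v) ^ k ≤ (2 * u) ^ k := by
          apply pow_le_pow_left₀ (by linarith) (by linarith)
      _ = 2 ^ k * u ^ k := by rw [mul_pow]
      _ ≤ 2 ^ k * (u ^ k + v ^ k) := by
          have : (0:ℝ) ≤ v ^ k := by positivity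
          have h2 : (0:ℝ) ≤ (2:ℝ) ^ k := by positivity
          nlinarith

lemma truncPow_le_bound {k j : ℕ} (hj : j ≤ k) (a : ℝ) : truncPow j a ≤ (1 + |a|) ^ k := by
  have h1 : (1:ℝ) ≤ 1 + |a| := by have := abs_nonneg a; linarith
  rcases Nat.eq_zero_or_pos j with rfl | hjp
  · rw [truncPow_zero']
    split_ifs
    · exact one_le_pow₀ h1
    · positivity
  · obtain ⟨m, rfl⟩ : ∃ m, j = m + 1 := ⟨j - 1, (Nat.succ_pred_eq_of_pos hjp).symm⟩
    rw [truncPow_succ]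
    calc (max a 0) ^ (m+1) ≤ (1 + |a|) ^ (m+1) := by
          apply pow_le_pow_left₀ (le_max_right _ _)
          have := le_abs_self a
          have := abs_nonneg a
          apply max_le <;> linarith
      _ ≤ (1 + |a|) ^ k := pow_le_pow_right₀ h1 hj

lemma truncPow_sub_le_bound {k j : ℕ} (hj : j ≤ k) (c x t : ℝ) (hc : |t| ≤ c) :
    truncPow j (x - t) ≤ 2 ^ k * ((1 + c) ^ k + |x| ^ k) := by
  calc truncPow j (x - t) ≤ (1 + |x - t|) ^ k := truncPow_le_bound hj _
    _ ≤ ((1 + c) + |x|) ^ k := by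
        apply pow_le_pow_left₀ (by positivity)
        have := abs_sub_abs_le_abs_sub x t
        have h2 := abs_sub x t
        have h3 : |x - t| ≤ |x| + |t| := abs_sub _ _
        linarith
    _ ≤ 2 ^ k * ((1 + c) ^ k + |x| ^ k) := sum_pow_le k (by linarith [abs_nonneg t]) (abs_nonneg x)

lemma integrable_truncPow_sub {k j : ℕ} (hj : j ≤ k) (μ : Measure ℝ) [IsProbabilityMeasure μ]
    (hμ : Integrable (fun x : ℝ => |x| ^ k) μ) (t : ℝ) :
    Integrable (fun x => truncPow j (x - t)) μ := by
  refine Integrable.mono' (g := fun x => 2 ^ k * ((1 + |t|) ^ k + |x| ^ k)) ?_ ?_ ?_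
  · exact (Integrable.add (integrable_const _) hμ).const_mul _
  · exact ((measurable_truncPow j).comp (measurable_id.sub measurable_const)).aestronglyMeasurable
  · filter_upwards with x
    rw [Real.norm_eq_abs, abs_of_nonneg (truncPow_nonneg _ _)]
    exact truncPow_sub_le_bound hj _ x t le_rfl

lemma integral_truncPow_zero (μ : Measure ℝ) [IsProbabilityMeasure μ] (t : ℝ) :
    ∫ x, truncPow 0 (x - t) ∂μ = (μ (Ioi t)).toReal := by
  have h : (fun x => truncPow 0 (x - t)) = Set.indicator (Ioi t) (fun _ => (1:ℝ)) := by
    funext x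
    rw [truncPow_zero']
    by_cases hx : t < x
    · rw [if_pos (by linarith), Set.indicator_of_mem (by exact hx)]
    · rw [if_neg (by intro hh; exact hx (by linarith)), Set.indicator_of_notMem (by exact hx)]
  rw [h, integral_indicator_const _ measurableSet_Ioi, smul_eq_mul, mul_one]
  rfl

lemma tendsto_toReal_measure_Ioi (μ : Measure ℝ) [IsProbabilityMeasure μ] (t : ℝ) :
    Tendsto (fun s => (μ (Ioi s)).toReal) (𝓝[>] t) (𝓝 ((μ (Ioi t)).toReal)) := by
  have h1 : ∀ s : ℝ, (μ (Ioi s)).toReal = 1 - ProbabilityTheory.cdf μ s := by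
    intro s
    rw [ProbabilityTheory.cdf_eq_real]
    change _ = 1 - (μ (Iic s)).toReal
    have h2 : μ (Ioi s) = 1 - μ (Iic s) := by
      rw [← compl_Iic, measure_compl measurableSet_Iic (measure_ne_top μ _), measure_univ]
    rw [h2, ENNReal.toReal_sub_of_le prob_le_one (by norm_num), ENNReal.toReal_one]
  simp_rw [h1]
  apply Tendsto.const_sub
  have h3 := (ProbabilityTheory.cdf μ).right_continuous t
  exact h3.tendsto.mono_left (nhdsWithin_mono t Ioi_subset_Ici_self)

lemma tendsto_integral_truncPow (k j : ℕ) (hj : j ≤ k) (μ : Measure ℝ)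
    [IsProbabilityMeasure μ] (hμ : Integrable (fun x : ℝ => |x| ^ k) μ) (t : ℝ) :
    Tendsto (fun s => ∫ x, truncPow j (x - s) ∂μ) (𝓝[>] t)
      (𝓝 (∫ x, truncPow j (x - t) ∂μ)) := by
  rcases Nat.eq_zero_or_pos j with rfl | hjp
  · simp_rw [integral_truncPow_zero]
    exact tendsto_toReal_measure_Ioi μ t
  · obtain ⟨m, rfl⟩ : ∃ m, j = m + 1 := ⟨j - 1, (Nat.succ_pred_eq_of_pos hjp).symm⟩
    have hcont : ContinuousAt (fun s => ∫ x, truncPow (m+1) (x - s) ∂μ) t := by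
      apply continuousAt_of_dominated (bound := fun x => 2 ^ k * ((1 + (|t|+1)) ^ k + |x| ^ k))
      · filter_upwards with s
        exact ((measurable_truncPow (m+1)).comp
          (measurable_id.sub measurable_const)).aestronglyMeasurable
      · filter_upwards [Metric.ball_mem_nhds t one_pos] with s hs
        filter_upwards with x
        rw [Real.norm_eq_abs, abs_of_nonneg (truncPow_nonneg _ _)]
        refine truncPow_sub_le_bound hj _ x s ?_
        rw [Metric.mem_ball, Real.dist_eq] at hs
        have := abs_sub_abs_le_abs_sub s t
        linarith
      · exact (Integrable.add (integrable_const _) hμ).const_mul _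
      · filter_upwards with x
        exact ((continuous_truncPow_succ m).comp
          (continuous_const.sub continuous_id)).continuousAt
    exact hcont.tendsto.mono_left nhdsWithin_le_nhds

lemma integral_truncPow_sub_bounds {k j : ℕ} (hj : j + 1 ≤ k) (μ : Measure ℝ)
    [IsProbabilityMeasure μ] (hμ : Integrable (fun x : ℝ => |x| ^ k) μ)
    (t ε : ℝ) (hε : 0 < ε) :
    (j+1 : ℝ) * ε * ∫ x, truncPow j (x - (t + ε)) ∂μ ≤
      (∫ x, truncPow (j+1) (x - t) ∂μ) - ∫ x, truncPow (j+1) (x - (t + ε)) ∂μ ∧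
    (∫ x, truncPow (j+1) (x - t) ∂μ) - ∫ x, truncPow (j+1) (x - (t + ε)) ∂μ ≤
      (j+1 : ℝ) * ε * ∫ x, truncPow j (x - t) ∂μ := by
  have hj' : j ≤ k := by omega
  have int1 := integrable_truncPow_sub hj' μ hμ (t + ε)
  have int0 := integrable_truncPow_sub hj' μ hμ t
  have intT := integrable_truncPow_sub hj μ hμ t
  have intT' := integrable_truncPow_sub hj μ hμ (t + ε)
  have key : ∀ x : ℝ,
      (j+1 : ℝ) * ε * truncPow j (x - (t + ε)) ≤
        truncPow (j+1) (x - t) - truncPow (j+1) (x - (t + ε)) ∧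
      truncPow (j+1) (x - t) - truncPow (j+1) (x - (t + ε)) ≤
        (j+1 : ℝ) * ε * truncPow j (x - t) := by
    intro x
    have h := truncPow_key j (by linarith : x - (t + ε) ≤ x - t)
    have he : x - t - (x - (t + ε)) = ε := by ring
    rw [he] at h
    exact h
  constructor
  · rw [← integral_sub intT intT']
    have h := integral_mono (μ := μ)
      (f := fun x => ((j:ℝ)+1) * ε * truncPow j (x - (t + ε)))
      (g := fun x => truncPow (j+1) (x - t) - truncPow (j+1) (x - (t + ε)))
      (int1.const_mul _) (intT.sub intT') (fun x => (key x).1)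
    rw [integral_sub intT intT'] at h ⊢
    rw [show (fun x => ((j:ℝ)+1) * ε * truncPow j (x - (t + ε)))
        = fun x => (((j:ℝ)+1) * ε) * truncPow j (x - (t + ε)) by ring_nf] at h
    rwa [integral_const_mul] at h
  · rw [← integral_sub intT intT']
    have h := integral_mono (μ := μ)
      (f := fun x => truncPow (j+1) (x - t) - truncPow (j+1) (x - (t + ε)))
      (g := fun x => ((j:ℝ)+1) * ε * truncPow j (x - t))
      (intT.sub intT') (int0.const_mul _) (fun x => (key x).2)
    rw [integral_sub intT intT'] at h ⊢
    rw [show (fun x => ((j:ℝ)+1) * ε * truncPow j (x - t))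
        = fun x => (((j:ℝ)+1) * ε) * truncPow j (x - t) by ring_nf] at h
    rwa [integral_const_mul] at h

lemma step_down {k j : ℕ} (hj : j + 1 ≤ k) (P Q : Measure ℝ)
    [IsProbabilityMeasure P] [IsProbabilityMeasure Q]
    (hP : Integrable (fun x : ℝ => |x| ^ k) P)
    (hQ : Integrable (fun x : ℝ => |x| ^ k) Q)
    (h : ∀ t : ℝ, 0 ≤ t → (∫ x, truncPow (j+1) (x - t) ∂P) = ∫ x, truncPow (j+1) (x - t) ∂Q)
    (t : ℝ) (ht : 0 ≤ t) :
    (∫ x, truncPow j (x - t) ∂P) = ∫ x, truncPow j (x - t) ∂Q := by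
  have main : ∀ (μ ν : Measure ℝ), ∀ (_ : IsProbabilityMeasure μ) (_ : IsProbabilityMeasure ν),
      Integrable (fun x : ℝ => |x| ^ k) μ → Integrable (fun x : ℝ => |x| ^ k) ν →
      (∀ t' : ℝ, 0 ≤ t' →
        (∫ x, truncPow (j+1) (x - t') ∂μ) = ∫ x, truncPow (j+1) (x - t') ∂ν) →
      (∫ x, truncPow j (x - t) ∂μ) ≤ ∫ x, truncPow j (x - t) ∂ν := by
    intro μ ν _ _ hμ hν heq
    have htd := tendsto_integral_truncPow k j (by omega) μ hμ t
    refine le_of_tendsto htd ?_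
    filter_upwards [self_mem_nhdsWithin] with s hs
    have hε : 0 < s - t := sub_pos.2 hs
    obtain ⟨l1, -⟩ := integral_truncPow_sub_bounds hj μ hμ t (s - t) hε
    obtain ⟨-, r2⟩ := integral_truncPow_sub_bounds hj ν hν t (s - t) hε
    have ha : t + (s - t) = s := by ring
    rw [ha] at l1 r2
    rw [heq t ht, heq s (by linarith)] at l1
    have hcomb := l1.trans r2
    have hpos : 0 < ((j:ℝ)+1) * (s - t) := by positivity
    have h2 : (((j:ℝ)+1) * (s - t)) * ∫ x, truncPow j (x - s) ∂μ ≤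
        (((j:ℝ)+1) * (s - t)) * ∫ x, truncPow j (x - t) ∂ν := by
      calc (((j:ℝ)+1) * (s - t)) * ∫ x, truncPow j (x - s) ∂μ
          = ((j:ℝ)+1) * (s - t) * ∫ x, truncPow j (x - s) ∂μ := by ring
        _ ≤ ((j:ℝ)+1) * (s - t) * ∫ x, truncPow j (x - t) ∂ν := hcomb
        _ = (((j:ℝ)+1) * (s - t)) * ∫ x, truncPow j (x - t) ∂ν := by ring
    exact le_of_mul_le_mul_left h2 hpos
  exact le_antisymm (main P Q inferInstance inferInstance hP hQ h)
    (main Q P inferInstance inferInstance hQ hP fun t' ht' => (h t' ht').symm)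

lemma right_main (k : ℕ) (P Q : Measure ℝ)
    [IsProbabilityMeasure P] [IsProbabilityMeasure Q]
    (hP : Integrable (fun x : ℝ => |x| ^ k) P)
    (hQ : Integrable (fun x : ℝ => |x| ^ k) Q)
    (h1 : ∀ t : ℝ, 0 ≤ t → (∫ x, truncPow k (x - t) ∂P) = ∫ x, truncPow k (x - t) ∂Q) :
    ∀ t : ℝ, 0 ≤ t → P (Ioi t) = Q (Ioi t) := by
  have all : ∀ d j : ℕ, j + d = k → ∀ t : ℝ, 0 ≤ t →
      (∫ x, truncPow j (x - t) ∂P) = ∫ x, truncPow j (x - t) ∂Q := by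
    intro d
    induction d with
    | zero => intro j hj; obtain rfl : j = k := by omega
              exact h1
    | succ n ih =>
        intro j hj t ht
        exact step_down (by omega) P Q hP hQ (ih (j+1) (by omega)) t ht
  intro t ht
  have h0 := all k 0 (by omega) t ht
  rw [integral_truncPow_zero, integral_truncPow_zero] at h0
  exact (ENNReal.toReal_eq_toReal_iff' (measure_ne_top P _) (measure_ne_top Q _)).1 h0


theorem stmt1 (k : ℕ) (P Q : Measure ℝ)
    [IsProbabilityMeasure P] [IsProbabilityMeasure Q]
    (hP : Integrable (fun x : ℝ => |x| ^ k) P)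
    (hQ : Integrable (fun x : ℝ => |x| ^ k) Q)
    (h1 : ∀ t : ℝ, 0 ≤ t → (∫ x, truncPow k (x - t) ∂P) = ∫ x, truncPow k (x - t) ∂Q)
    (h2 : ∀ t : ℝ, t ≤ 0 → (∫ x, truncPow k (t - x) ∂P) = ∫ x, truncPow k (t - x) ∂Q) :
    P = Q := by
  -- right side : agree on Ioi t for t ≥ 0
  have hIoi := right_main k P Q hP hQ h1
  -- left side via reflection
  have habs : AEStronglyMeasurable (fun y : ℝ => |y| ^ k) (P.map fun x => -x) :=
    (measurable_id.abs.pow_const k).aestronglyMeasurable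
  have habsQ : AEStronglyMeasurable (fun y : ℝ => |y| ^ k) (Q.map fun x => -x) :=
    (measurable_id.abs.pow_const k).aestronglyMeasurable
  have hneg : AEMeasurable (fun x : ℝ => -x) P := measurable_neg.aemeasurable
  have hnegQ : AEMeasurable (fun x : ℝ => -x) Q := measurable_neg.aemeasurable
  have instP' : IsProbabilityMeasure (P.map fun x : ℝ => -x) := Measure.isProbabilityMeasure_map hneg
  have instQ' : IsProbabilityMeasure (Q.map fun x : ℝ => -x) := Measure.isProbabilityMeasure_map hnegQ
  have hP' : Integrable (fun y : ℝ => |y| ^ k) (P.map fun x => -x) := by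
    rw [integrable_map_measure habs hneg]
    have he : ((fun y : ℝ => |y| ^ k) ∘ fun x : ℝ => -x) = fun x : ℝ => |x| ^ k := by
      funext x; simp [abs_neg]
    rw [he]; exact hP
  have hQ' : Integrable (fun y : ℝ => |y| ^ k) (Q.map fun x => -x) := by
    rw [integrable_map_measure habsQ hnegQ]
    have he : ((fun y : ℝ => |y| ^ k) ∘ fun x : ℝ => -x) = fun x : ℝ => |x| ^ k := by
      funext x; simp [abs_neg]
    rw [he]; exact hQ
  have h1' : ∀ s : ℝ, 0 ≤ s →
      (∫ y, truncPow k (y - s) ∂(P.map fun x => -x)) =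
        ∫ y, truncPow k (y - s) ∂(Q.map fun x => -x) := by
    intro s hs
    have hm : AEStronglyMeasurable (fun y : ℝ => truncPow k (y - s)) (P.map fun x => -x) :=
      ((measurable_truncPow k).comp (measurable_id.sub measurable_const)).aestronglyMeasurable
    have hmQ : AEStronglyMeasurable (fun y : ℝ => truncPow k (y - s)) (Q.map fun x => -x) :=
      ((measurable_truncPow k).comp (measurable_id.sub measurable_const)).aestronglyMeasurable
    rw [integral_map hneg hm, integral_map hnegQ hmQ]
    have he : ∀ x : ℝ, -x - s = -s - x := fun x => by ring
    simp_rw [he]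
    exact h2 (-s) (by linarith)
  have hIoi' := right_main k (P.map fun x => -x) (Q.map fun x => -x) hP' hQ' h1'
  have hIio : ∀ t : ℝ, t ≤ 0 → P (Iio t) = Q (Iio t) := by
    intro t ht
    have h := hIoi' (-t) (by linarith)
    have hpre : (fun x : ℝ => -x) ⁻¹' Ioi (-t) = Iio t := by
      ext x; simp [Set.mem_Ioi, Set.mem_Iio]
    rw [Measure.map_apply measurable_neg measurableSet_Ioi,
        Measure.map_apply measurable_neg measurableSet_Ioi, hpre] at h
    exact h
  -- conclude
  refine Measure.ext_of_Iic P Q fun t => ?_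
  rcases le_or_gt 0 t with ht | ht
  · have h := hIoi t ht
    rw [← compl_Ioi, measure_compl measurableSet_Ioi (measure_ne_top _ _),
        measure_compl measurableSet_Ioi (measure_ne_top _ _), measure_univ, measure_univ, h]
  · -- t < 0 : approximate Iic t from above by Iio (s n) with s n ≤ 0
    set s : ℕ → ℝ := fun n => t + (-t) / (n + 1) with hs
    have hsle : ∀ n : ℕ, s n ≤ 0 := by
      intro n
      have h1n : (1:ℝ) ≤ (n:ℝ) + 1 := by exact_mod_cast Nat.one_le_iff_ne_zero.mpr (by omega)
      have : (-t) / ((n:ℝ) + 1) ≤ -t := div_le_self (by linarith) h1n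
      simp only [hs]
      linarith
    have hsgt : ∀ n : ℕ, t < s n := by
      intro n
      have : 0 < (-t) / ((n:ℝ) + 1) := div_pos (by linarith) (by positivity)
      simp only [hs]
      linarith
    have hanti : Antitone s := by
      intro n m hnm
      simp only [hs]
      have : (-t) / ((m:ℝ) + 1) ≤ (-t) / ((n:ℝ) + 1) := by
        apply div_le_div_of_nonneg_left (by linarith) (by positivity)
        exact_mod_cast by omega
      linarith
    have hiInter : Iic t = ⋂ n, Iio (s n) := by
      ext x
      simp only [Set.mem_Iic, Set.mem_iInter, Set.mem_Iio]
      constructor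
      · intro hx n; exact lt_of_le_of_lt hx (hsgt n)
      · intro hx
        by_contra hc
        push_neg at hc
        have hxt : 0 < x - t := by linarith
        obtain ⟨n, hn⟩ := exists_nat_gt ((-t) / (x - t))
        have h6 : -t < (n:ℝ) * (x - t) := (div_lt_iff₀ hxt).1 hn
        have hr : ((n:ℝ) + 1) * (x - t) = (n:ℝ) * (x - t) + (x - t) := by ring
        have h7 : (-t) / ((n:ℝ) + 1) < x - t := by
          rw [div_lt_iff₀ (by positivity : (0:ℝ) < (n:ℝ) + 1)]
          nlinarith
        have := hx n
        simp only [hs] at this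
        linarith
    have hdir : Directed (· ⊇ ·) fun n => Iio (s n) := by
      intro m n
      exact ⟨max m n, Iio_subset_Iio (hanti (le_max_left _ _)),
        Iio_subset_Iio (hanti (le_max_right _ _))⟩
    have hmeasP : P (Iic t) = ⨅ n, P (Iio (s n)) := by
      rw [hiInter]
      exact Directed.measure_iInter (fun n => measurableSet_Iio.nullMeasurableSet) hdir
        ⟨0, measure_ne_top _ _⟩
    have hmeasQ : Q (Iic t) = ⨅ n, Q (Iio (s n)) := by
      rw [hiInter]
      exact Directed.measure_iInter (fun n => measurableSet_Iio.nullMeasurableSet) hdir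
        ⟨0, measure_ne_top _ _⟩
    rw [hmeasP, hmeasQ]
    exact iInf_congr fun n => hIio _ (hsle n)
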